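/- arXiv:1910.12972 — 3 statements merged into one kernel-verified Lean document; each statement's English description precedes it below -/
import Mathlib

section
/- Let S be a finite set, p : S → ℝ with p s ≥ 0 for all s and Σ_{s ∈ S} p s = 1, r : S → ℝ, and α ∈ (0,1]. Suppose q ∈ ℝ satisfies Σ_{s : r s ≥ q} p s = α. Then F(q) = α⁻¹ · Σ_{s : r s ≥ q} p s · r s (i.e., F(q) equals the conditional expectation E[R | R ≥ q]), and q minimizes F over ℝ, where F(b) = b + α⁻¹ · Σ_{s ∈ S} p s · max (r s − b) 0. Consequently the minimum of F equals the Conditional Value-at-Risk CVaR_α(R) = E[R : R ≥ VaR_α(R)]. -/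
open scoped Classical

/-- If `q` is an exact upper `α`-quantile of the load-shedding distribution
(`Σ_{s : r s ≥ q} p s = α`), then the Rockafellar–Uryasev function
`F(b) = b + α⁻¹ Σ_s p s · max (r s − b) 0` satisfies
`F(q) = α⁻¹ Σ_{s : r s ≥ q} p s · r s` (the conditional tail expectation
`E[R | R ≥ q]`, i.e. `CVaR_α`), and `q` minimizes `F` over ℝ. -/
theorem RU_at_quantile_eq_cvar_and_minimizes
    (S : Type*) [Fintype S]
    (p r : S → ℝ) (hp : ∀ s, 0 ≤ p s) (hsum : ∑ s, p s = 1)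
    (α : ℝ) (hα0 : 0 < α) (hα1 : α ≤ 1)
    (q : ℝ) (hq : ∑ s ∈ Finset.univ.filter (fun s => q ≤ r s), p s = α) :
    (q + α⁻¹ * ∑ s, p s * max (r s - q) 0
        = α⁻¹ * ∑ s ∈ Finset.univ.filter (fun s => q ≤ r s), p s * r s)
    ∧
    (∀ b : ℝ,
      q + α⁻¹ * ∑ s, p s * max (r s - q) 0
        ≤ b + α⁻¹ * ∑ s, p s * max (r s - b) 0) := by
  have hαne : α ≠ 0 := ne_of_gt hα0
  have h1 : ∑ s, p s * max (r s - q) 0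
      = ∑ s ∈ Finset.univ.filter (fun s => q ≤ r s), p s * (r s - q) := by
    rw [Finset.sum_filter]
    apply Finset.sum_congr rfl
    intro s _
    by_cases h : q ≤ r s
    · simp [h, max_eq_left (by linarith : (0:ℝ) ≤ r s - q)]
    · push_neg at h
      simp [not_le.mpr h, max_eq_right (by linarith : r s - q ≤ 0)]
  have h2 : ∑ s ∈ Finset.univ.filter (fun s => q ≤ r s), p s * (r s - q)
      = (∑ s ∈ Finset.univ.filter (fun s => q ≤ r s), p s * r s) - q * α := by
    rw [← hq, Finset.mul_sum, ← Finset.sum_sub_distrib]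
    apply Finset.sum_congr rfl
    intro s _; ring
  constructor
  · rw [h1, h2]
    field_simp
    ring
  · intro b
    have hpt : ∀ s ∈ (Finset.univ : Finset S),
        p s * max (r s - q) 0 + (q - b) * (if q ≤ r s then p s else 0)
          ≤ p s * max (r s - b) 0 := by
      intro s _
      by_cases h : q ≤ r s
      · have hmq : max (r s - q) 0 = r s - q := max_eq_left (by linarith)
        have h2 : r s - b ≤ max (r s - b) 0 := le_max_left _ _
        have h3 : p s * (r s - b) ≤ p s * max (r s - b) 0 :=
          mul_le_mul_of_nonneg_left h2 (hp s)
        simp only [h, if_true, hmq]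
        nlinarith
      · have hmq : max (r s - q) 0 = 0 := max_eq_right (by push_neg at h; linarith)
        simp only [h, if_false, hmq, mul_zero, zero_add, mul_zero, add_zero]
        exact mul_nonneg (hp s) (le_max_right _ _)
    have hsumle := Finset.sum_le_sum hpt
    rw [Finset.sum_add_distrib, ← Finset.mul_sum, ← Finset.sum_filter, hq] at hsumle
    have hmono := mul_le_mul_of_nonneg_left hsumle (inv_nonneg.mpr hα0.le)
    have hexp : α⁻¹ * ((∑ s, p s * max (r s - q) 0) + (q - b) * α)
        = α⁻¹ * (∑ s, p s * max (r s - q) 0) + (q - b) := by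
      field_simp
    rw [hexp] at hmono
    linarith
end

section
/- Let S be a finite set, p : S → ℝ with p s ≥ 0 for all s, D ≥ 0, V̄ ≥ 0, α ∈ ℝ, and r : S → ℝ with 0 ≤ r s ≤ D for all s. Then there exists φ : S → {0,1} satisfying r s − D · φ s ≤ V̄ for all s and Σ_{s ∈ S} p s · φ s ≤ α, if and only if Σ_{s : r s > V̄} p s ≤ α. (This establishes the correctness of the mixed-integer formulation of the VaR constraint: the binary variables can be chosen feasibly exactly when the probability of load shedding exceeding V̄ is at most α.) -/
open scoped Classical

/-- Correctness of the mixed-integer formulation of the VaR constraint: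
binary variables `φ s ∈ {0,1}` with `r s − D·φ s ≤ V̄` and
`Σ_s p s · φ s ≤ α` exist if and only if the probability of load shedding
exceeding `V̄` is at most `α`. -/
theorem var_mip_correct
    (S : Type*) [Fintype S]
    (p : S → ℝ) (hp : ∀ s, 0 ≤ p s)
    (D : ℝ) (hD : 0 ≤ D) (Vbar : ℝ) (hV : 0 ≤ Vbar) (α : ℝ)
    (r : S → ℝ) (hr0 : ∀ s, 0 ≤ r s) (hrD : ∀ s, r s ≤ D) :
    (∃ φ : S → ℝ, (∀ s, φ s = 0 ∨ φ s = 1) ∧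
        (∀ s, r s - D * φ s ≤ Vbar) ∧
        ∑ s, p s * φ s ≤ α)
      ↔
    ∑ s ∈ Finset.univ.filter (fun s => Vbar < r s), p s ≤ α := by
  constructor
  · rintro ⟨φ, hφ01, hφV, hφα⟩
    refine le_trans ?_ hφα
    rw [← Finset.sum_filter_add_sum_filter_not Finset.univ (fun s => Vbar < r s)
      (fun s => p s * φ s)]
    have h1 : ∑ s ∈ Finset.univ.filter (fun s => Vbar < r s), p s
        = ∑ s ∈ Finset.univ.filter (fun s => Vbar < r s), p s * φ s := by
      apply Finset.sum_congr rfl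
      intro s hs
      simp only [Finset.mem_filter] at hs
      rcases hφ01 s with h0 | h1
      · exfalso
        have := hφV s
        rw [h0, mul_zero, sub_zero] at this
        linarith [hs.2]
      · rw [h1, mul_one]
    rw [h1]
    have h2 : 0 ≤ ∑ s ∈ Finset.univ.filter (fun s => ¬ Vbar < r s), p s * φ s := by
      apply Finset.sum_nonneg
      intro s _
      rcases hφ01 s with h0 | h1
      · rw [h0]; simp
      · rw [h1]; simpa using hp s
    linarith
  · intro h
    refine ⟨fun s => if Vbar < r s then 1 else 0, fun s => ?_, fun s => ?_, ?_⟩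
    · by_cases hs : Vbar < r s <;> simp [hs]
    · by_cases hs : Vbar < r s
      · simp only [hs, if_true, mul_one]
        linarith [hrD s]
      · simp only [hs, if_false, mul_zero, sub_zero]
        linarith [not_lt.mp hs]
    · calc ∑ s, p s * (if Vbar < r s then 1 else 0)
          = ∑ s ∈ Finset.univ.filter (fun s => Vbar < r s), p s := by
            rw [Finset.sum_filter]
            apply Finset.sum_congr rfl
            intro s _
            by_cases hs : Vbar < r s <;> simp [hs]
        _ ≤ α := h
end

section
/- Let S be a finite set, J a finite index set, p : S → ℝ with p s ≥ 0 for all s, D ∈ ℝ, a : S → J → ℝ, and x⁰ : J → ℝ. Let Ω = { s ∈ S : D − Σ_{j ∈ J} a s j · x⁰ j > 0 } and define g : J → ℝ by g j = − Σ_{s ∈ Ω} p s · a s j. Then for every x : J → ℝ, EPNS(x) ≥ EPNS(x⁰) + Σ_{j ∈ J} g j · (x j − x⁰ j), where EPNS(x) = Σ_{s ∈ S} p s · max (D − Σ_{j ∈ J} a s j · x j) 0. That is, the vector of derivatives ∂EPNS/∂x_j = −Σ_{s ∈ Ω} p s ξ_j^s ḡ_j computed from the Monte Carlo states with load shedding is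 a subgradient of EPNS at x⁰, so the corresponding Benders feasibility cut is a valid linear under-estimator of EPNS. -/
open scoped Classical

/-- The vector `g j = −Σ_{s ∈ Ω} p s · a s j`, computed from the set `Ω` of
states with positive load shedding at the trial plan `x⁰`, is a subgradient
of `EPNS(x) = Σ_s p s · max (D − Σ_j a s j · x j) 0` at `x⁰`:
the corresponding Benders cut is a valid linear under-estimator of EPNS. -/
theorem epns_subgradient_cut_valid
    (S J : Type*) [Fintype S] [Fintype J]
    (p : S → ℝ) (hp : ∀ s, 0 ≤ p s)
    (D : ℝ) (a : S → J → ℝ) (x0 : J → ℝ) :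
    ∀ x : J → ℝ,
      ∑ s, p s * max (D - ∑ j, a s j * x j) 0
        ≥ (∑ s, p s * max (D - ∑ j, a s j * x0 j) 0)
          + ∑ j, (-∑ s ∈ Finset.univ.filter
                (fun s => 0 < D - ∑ j', a s j' * x0 j'), p s * a s j)
              * (x j - x0 j) := by
  intro x
  set Ω := Finset.univ.filter (fun s : S => 0 < D - ∑ j', a s j' * x0 j') with hΩ
  have key : ∑ j, (-∑ s ∈ Ω, p s * a s j) * (x j - x0 j)
      = ∑ s ∈ Ω, p s * ((D - ∑ j, a s j * x j) - (D - ∑ j, a s j * x0 j)) := by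
    have h1 : ∑ j, (-∑ s ∈ Ω, p s * a s j) * (x j - x0 j)
        = ∑ j, ∑ s ∈ Ω, -(p s * a s j) * (x j - x0 j) := by
      refine Finset.sum_congr rfl fun j _ => ?_
      rw [← Finset.sum_neg_distrib, Finset.sum_mul]
    rw [h1, Finset.sum_comm]
    refine Finset.sum_congr rfl fun s _ => ?_
    rw [sub_sub_sub_cancel_left, ← Finset.sum_sub_distrib, Finset.mul_sum]
    refine Finset.sum_congr rfl fun j _ => ?_
    ring
  rw [ge_iff_le, key, ← Finset.sum_filter_add_sum_filter_not Finset.univ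
    (fun s : S => 0 < D - ∑ j', a s j' * x0 j')
    (fun s => p s * max (D - ∑ j, a s j * x0 j) 0), ← hΩ]
  rw [← Finset.sum_filter_add_sum_filter_not Finset.univ
    (fun s : S => 0 < D - ∑ j', a s j' * x0 j')
    (fun s => p s * max (D - ∑ j, a s j * x j) 0), ← hΩ]
  rw [add_right_comm, ← Finset.sum_add_distrib]
  refine add_le_add (Finset.sum_le_sum ?_) (Finset.sum_le_sum ?_)
  · intro s hs
    rw [hΩ, Finset.mem_filter] at hs
    rw [max_eq_left hs.2.le, ← mul_add]
    have : D - ∑ j, a s j * x0 j + (D - ∑ j, a s j * x j - (D - ∑ j, a s j * x0 j))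
        = D - ∑ j, a s j * x j := by ring
    rw [this]
    exact mul_le_mul_of_nonneg_left (le_max_left _ _) (hp s)
  · intro s hs
    rw [Finset.mem_filter] at hs
    rw [max_eq_right (le_of_not_gt hs.2), mul_zero]
    exact mul_nonneg (hp s) (le_max_right _ _)
end
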